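/- Let G be a finite group and C ≠ S a non-critical closed twin class of P(G). Then C is of compound type if and only if there exist a prime p and integers r ≥ 2 and 0 ≤ s ≤ r−2 with |C| = p^r − p^s and |Ĉ| = p^r. -/

import Mathlib

/-- Closed neighbourhood of a vertex. -/
def closedNbhd {V : Type*} (Γ : SimpleGraph V) (x : V) : Set V := {y | Γ.Adj x y} ∪ {x}

/-- Closed neighbourhood of a set of vertices (intersection convention; N[∅] = univ). -/
def closedNbhdSet {V : Type*} (Γ : SimpleGraph V) (X : Set V) : Set V :=
  ⋂ x ∈ X, closedNbhd Γ x

/-- Neighbourhood closure X̂ = N[N[X]]. -/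
def nbhdClosure {V : Type*} (Γ : SimpleGraph V) (X : Set V) : Set V :=
  closedNbhdSet Γ (closedNbhdSet Γ X)

/-- Closed twin class of a vertex. -/
def twinClass {V : Type*} (Γ : SimpleGraph V) (y : V) : Set V :=
  {x | closedNbhd Γ x = closedNbhd Γ y}

/-- The power graph of a group. -/
def powerGraph (G : Type*) [Group G] : SimpleGraph G where
  Adj x y := x ≠ y ∧ ((∃ m : ℕ, 0 < m ∧ y = x ^ m) ∨ (∃ m : ℕ, 0 < m ∧ x = y ^ m))
  symm := by constructor; rintro x y ⟨h, h2⟩; exact ⟨h.symm, h2.symm⟩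
  loopless := by constructor; rintro x ⟨h, _⟩; exact h rfl

/-- The ⋄-class of an element: elements generating the same cyclic subgroup. -/
def diamondClass {G : Type*} [Group G] (y : G) : Set G :=
  {x | Subgroup.zpowers x = Subgroup.zpowers y}

/-- A critical class: Ĉ = C ∪̇ {1} and |Ĉ| = p^r for a prime p and r ≥ 2. -/
def IsCritical {G : Type*} [Group G] (P : SimpleGraph G) (C : Set G) : Prop :=
  nbhdClosure P C = C ∪ {1} ∧ (1 : G) ∉ C ∧
    ∃ p r : ℕ, p.Prime ∧ 2 ≤ r ∧ (nbhdClosure P C).ncard = p ^ r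



set_option linter.unusedSectionVars false

open Subgroup

section Aux
variable {G : Type*} [Group G] [Fintype G]

/-- comparability -/
def Cmp {G : Type*} [Group G] (x y : G) : Prop :=
  y ∈ Subgroup.zpowers x ∨ x ∈ Subgroup.zpowers y

lemma cmp_symm {x y : G} (h : Cmp x y) : Cmp y x := h.symm

lemma cmp_refl (x : G) : Cmp x x := Or.inl (mem_zpowers x)

lemma mem_zpowers_nat {x y : G} : y ∈ zpowers x ↔ ∃ m : ℕ, 0 < m ∧ y = x ^ m := by
  constructor
  · intro h
    rw [← mem_powers_iff_mem_zpowers] at h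
    obtain ⟨m, hm⟩ := h
    rcases Nat.eq_zero_or_pos m with rfl | hpos
    · exact ⟨orderOf x, orderOf_pos x, by rw [pow_orderOf_eq_one]; simpa using hm.symm⟩
    · exact ⟨m, hpos, hm.symm⟩
  · rintro ⟨m, _, rfl⟩
    exact zpow_natCast x m ▸ zpow_mem (mem_zpowers x) (m : ℤ)

lemma closedNbhd_eq (x : G) : closedNbhd (powerGraph G) x = {y | Cmp x y} := by
  ext y
  simp only [closedNbhd, powerGraph, Set.mem_union, Set.mem_setOf_eq, Set.mem_singleton_iff]
  constructor
  · rintro (⟨hne, h | h⟩ | rfl)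
    · exact Or.inl (mem_zpowers_nat.2 (by obtain ⟨m, hm, hmm⟩ := h; exact ⟨m, hm, hmm⟩))
    · exact Or.inr (mem_zpowers_nat.2 (by obtain ⟨m, hm, hmm⟩ := h; exact ⟨m, hm, hmm⟩))
    · exact cmp_refl _
  · intro h
    by_cases hxy : x = y
    · exact Or.inr hxy.symm
    · rcases h with h | h
      · obtain ⟨m, hm, hmm⟩ := mem_zpowers_nat.1 h
        exact Or.inl ⟨hxy, Or.inl ⟨m, hm, hmm⟩⟩
      · obtain ⟨m, hm, hmm⟩ := mem_zpowers_nat.1 h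
        exact Or.inl ⟨hxy, Or.inr ⟨m, hm, hmm⟩⟩

lemma mem_closedNbhd_iff {x y : G} : y ∈ closedNbhd (powerGraph G) x ↔ Cmp x y := by
  rw [closedNbhd_eq]; rfl

end Aux
section Aux2
variable {G : Type*} [Group G] [Fintype G]
open Subgroup

/-- Bezout: if gcd (orderOf w) j divides i then w^i ∈ zpowers (w^j). -/
lemma pow_mem_zpowers_pow {w : G} {i j : ℕ} (h : Nat.gcd (orderOf w) j ∣ i) :
    w ^ i ∈ zpowers (w ^ j) := by
  set n := orderOf w with hn
  obtain ⟨c, hc⟩ := h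
  have hbez : (Nat.gcd n j : ℤ) = n * Nat.gcdA n j + j * Nat.gcdB n j := Nat.gcd_eq_gcd_ab n j
  rw [Subgroup.mem_zpowers_iff]
  refine ⟨Nat.gcdB n j * (c : ℤ), ?_⟩
  have e1 : (i : ℤ) = (n : ℤ) * (Nat.gcdA n j * c) + (j : ℤ) * (Nat.gcdB n j * c) := by
    have : (i : ℤ) = (Nat.gcd n j : ℤ) * c := by exact_mod_cast congrArg (Nat.cast : ℕ → ℤ) hc
    rw [this, hbez]; ring
  have hwn : w ^ ((n : ℤ) * (Nat.gcdA n j * c)) = 1 := by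
    rw [zpow_mul, zpow_natCast, pow_orderOf_eq_one, one_zpow]
  calc (w ^ j) ^ (Nat.gcdB n j * (c : ℤ))
      = w ^ ((j : ℤ) * (Nat.gcdB n j * c)) := by
        rw [← zpow_natCast w j, ← zpow_mul]
    _ = w ^ ((n : ℤ) * (Nat.gcdA n j * c)) * w ^ ((j : ℤ) * (Nat.gcdB n j * c)) := by
        rw [hwn, one_mul]
    _ = w ^ (i : ℤ) := by rw [← zpow_add, ← e1]
    _ = w ^ i := zpow_natCast w i

/-- In a cyclic group ⟨w⟩, order divisibility gives containment. -/
lemma mem_zpowers_of_orderOf_dvd {w u v : G} (hu : u ∈ zpowers w) (hv : v ∈ zpowers w)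
    (h : orderOf u ∣ orderOf v) : u ∈ zpowers v := by
  obtain ⟨i, -, rfl⟩ := mem_zpowers_nat.1 hu
  obtain ⟨j, -, rfl⟩ := mem_zpowers_nat.1 hv
  set n := orderOf w with hn
  have hnpos : 0 < n := orderOf_pos w
  -- (w^i)^(orderOf (w^j)) = 1
  have h1 : (w ^ i) ^ orderOf (w ^ j) = 1 := by
    rw [← orderOf_dvd_iff_pow_eq_one]; exact h
  have h2 : n ∣ i * orderOf (w ^ j) := by
    rw [← pow_mul] at h1
    rw [hn]
    exact orderOf_dvd_iff_pow_eq_one.2 h1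
  have h3 : orderOf (w ^ j) = n / Nat.gcd n j := by rw [orderOf_pow]
  set g := Nat.gcd n j with hg
  have hgdvd : g ∣ n := Nat.gcd_dvd_left n j
  have hgn : g * (n / g) = n := Nat.mul_div_cancel' hgdvd
  have hdvpos : 0 < n / g := Nat.div_pos (Nat.le_of_dvd hnpos hgdvd) (Nat.gcd_pos_of_pos_left j hnpos)
  have h4 : g * (n / g) ∣ i * (n / g) := by rw [hgn]; rw [h3] at h2; exact h2
  have h5 : g ∣ i := (Nat.mul_dvd_mul_iff_right hdvpos).1 h4
  exact pow_mem_zpowers_pow h5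

lemma zpowers_eq_of_mem_of_orderOf_dvd {u v : G} (hu : u ∈ zpowers v)
    (h : orderOf v ∣ orderOf u) : zpowers u = zpowers v := by
  have : v ∈ zpowers u := mem_zpowers_of_orderOf_dvd (mem_zpowers v) hu h
  exact le_antisymm (zpowers_le.2 hu) (zpowers_le.2 this)

/-- Element of each order dividing orderOf w. -/
lemma exists_mem_zpowers_orderOf_eq {w : G} {e : ℕ} (he : e ∣ orderOf w) :
    ∃ u : G, u ∈ zpowers w ∧ orderOf u = e := by
  set n := orderOf w with hn
  have hnpos : 0 < n := orderOf_pos w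
  have hepos : 0 < e := Nat.pos_of_dvd_of_pos he hnpos
  refine ⟨w ^ (n / e), ?_, ?_⟩
  · exact mem_zpowers_nat.2 ⟨n / e + n, by positivity, by
      rw [pow_add, pow_orderOf_eq_one, mul_one]⟩
  · rw [orderOf_pow, ← hn]
    have h1 : n / e ∣ n := Nat.div_dvd_of_dvd he
    rw [Nat.gcd_eq_right h1]
    rw [Nat.div_div_self he hnpos.ne']

/-- Comparability chain inside a cyclic p-group. -/
lemma cmp_of_mem_zpowers_prime_pow {w u v : G} {p r : ℕ} (hp : p.Prime)
    (hw : orderOf w = p ^ r) (hu : u ∈ zpowers w) (hv : v ∈ zpowers w) : Cmp u v := by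
  have hou : orderOf u ∣ p ^ r := hw ▸ orderOf_dvd_of_mem_zpowers hu
  have hov : orderOf v ∣ p ^ r := hw ▸ orderOf_dvd_of_mem_zpowers hv
  obtain ⟨a, -, ha⟩ := (Nat.dvd_prime_pow hp).1 hou
  obtain ⟨b, -, hb⟩ := (Nat.dvd_prime_pow hp).1 hov
  rcases le_total a b with hab | hab
  · exact Or.inr (mem_zpowers_of_orderOf_dvd hu hv (by rw [ha, hb]; exact pow_dvd_pow p hab))
  · exact Or.inl (mem_zpowers_of_orderOf_dvd hv hu (by rw [ha, hb]; exact pow_dvd_pow p hab))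

lemma ncard_zpowers (x : G) : (zpowers x : Set G).ncard = orderOf x := by
  rw [← Nat.card_coe_set_eq, SetLike.coe_sort_coe, Nat.card_zpowers]

end Aux2
section Aux3
variable {G : Type*} [Group G] [Fintype G]
open Subgroup

lemma setOf_mem_orderOf_dvd_ncard {x : G} {e : ℕ} (he : e ∣ orderOf x) :
    {v : G | v ∈ zpowers x ∧ orderOf v ∣ e}.ncard = e := by
  obtain ⟨u, hu, hue⟩ := exists_mem_zpowers_orderOf_eq he
  have heq : {v : G | v ∈ zpowers x ∧ orderOf v ∣ e} = (zpowers u : Set G) := by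
    ext v
    constructor
    · rintro ⟨hv, hd⟩
      exact mem_zpowers_of_orderOf_dvd hv hu (by rw [hue]; exact hd)
    · intro hv
      exact ⟨(zpowers_le.2 hu) hv, hue ▸ orderOf_dvd_of_mem_zpowers hv⟩
  rw [heq, ncard_zpowers, hue]

instance isCyclic_zpowers (z : G) : IsCyclic ↥(zpowers z) := by
  refine ⟨⟨⟨z, mem_zpowers z⟩, ?_⟩⟩
  rintro ⟨g, hg⟩
  obtain ⟨k, hk⟩ := Subgroup.mem_zpowers_iff.1 hg
  exact ⟨k, by ext; simpa using hk⟩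

lemma diamondClass_eq (z : G) :
    diamondClass z = {g : G | g ∈ zpowers z ∧ orderOf g = orderOf z} := by
  ext g
  constructor
  · intro hg
    have hg' : zpowers g = zpowers z := hg
    constructor
    · rw [← hg']; exact mem_zpowers g
    · rw [← Nat.card_zpowers, ← Nat.card_zpowers, hg']
  · rintro ⟨hmem, hord⟩
    exact zpowers_eq_of_mem_of_orderOf_dvd hmem (hord ▸ dvd_rfl)

lemma ncard_diamondClass (z : G) : (diamondClass z).ncard = Nat.totient (orderOf z) := by
  classical
  rw [diamondClass_eq]
  set H := zpowers z with hH
  have hcard : Fintype.card ↥H = orderOf z := Fintype.card_zpowers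
  have hfil : (Finset.univ.filter fun h : ↥H => orderOf h = orderOf z).card
      = Nat.totient (orderOf z) :=
    IsCyclic.card_orderOf_eq_totient (by rw [hcard])
  have himg : {g : G | g ∈ zpowers z ∧ orderOf g = orderOf z}
      = Subtype.val '' {h : ↥H | orderOf h = orderOf z} := by
    ext g
    constructor
    · rintro ⟨hmem, hord⟩
      exact ⟨⟨g, hmem⟩, by rwa [Set.mem_setOf_eq, orderOf_mk], rfl⟩
    · rintro ⟨⟨g', hg'⟩, hh, rfl⟩
      exact ⟨hg', by rwa [Set.mem_setOf_eq, orderOf_mk] at hh⟩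
  rw [himg, Set.ncard_image_of_injective _ Subtype.val_injective]
  rw [← hfil, Set.ncard_eq_toFinset_card']
  congr 1
  ext h
  simp
end Aux3
section Arith

lemma prime_pow_of_middle_divisor {n d : ℕ} (hn : 0 < n) (hdn : d ∣ n) (hd2 : 2 ≤ d)
    (hdne : d ≠ n) (h : ∀ e, e ∣ n → d ∣ e ∨ e ∣ d) :
    ∃ r : ℕ, Nat.Prime d.minFac ∧ n = d.minFac ^ r := by
  set p := d.minFac with hp
  have hpprime : p.Prime := Nat.minFac_prime (by omega)
  have hpd : p ∣ d := Nat.minFac_dvd d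
  have key : ∀ q : ℕ, q.Prime → q ∣ n → q = p := by
    intro q hq hqn
    by_contra hqp
    -- q ^ v_q(n) divides d
    have hvq : 0 < n.factorization q := Nat.Prime.factorization_pos_of_dvd hq hn.ne' hqn
    have heq : q ^ n.factorization q ∣ n := Nat.ordProj_dvd n q
    have heqd : q ^ n.factorization q ∣ d := by
      rcases h _ heq with hcase | hcase
      · exfalso
        have : p ∣ q ^ n.factorization q := hpd.trans hcase
        have : p ∣ q := hpprime.dvd_of_dvd_pow this
        exact hqp ((Nat.prime_dvd_prime_iff_eq hpprime hq).1 this).symm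
      · exact hcase
    have hqdvd : q ∣ d := dvd_trans (dvd_pow_self q hvq.ne') heqd
    rcases h _ (Nat.ordProj_dvd n p) with hcase | hcase
    · -- d ∣ p ^ v_p(n), so q ∣ p-power, q = p, contra
      have : q ∣ p ^ n.factorization p := hqdvd.trans hcase
      exact hqp ((Nat.prime_dvd_prime_iff_eq hq hpprime).1 (hq.dvd_of_dvd_pow this))
    · -- p ^ v_p(n) ∣ d and for every prime q' ≠ p : q' ^ v ∣ d, hence n ∣ d
      have hnd : n ∣ d := by
        rw [← Nat.factorization_le_iff_dvd hn.ne' (by omega : d ≠ 0)]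
        intro q'
        by_cases hq' : q'.Prime
        · by_cases hq'n : q' ∣ n
          · have hdd : q' ^ n.factorization q' ∣ d := by
              by_cases hq'p : q' = p
              · rw [hq'p]; exact hcase
              · rcases h _ (Nat.ordProj_dvd n q') with hc2 | hc2
                · exfalso
                  have h1 : p ∣ q' ^ n.factorization q' := hpd.trans hc2
                  have h2 : p ∣ q' := hpprime.dvd_of_dvd_pow h1
                  exact hq'p ((Nat.prime_dvd_prime_iff_eq hpprime hq').1 h2).symm
                · exact hc2
            exact (Nat.Prime.pow_dvd_iff_le_factorization hq' (by omega)).1 hdd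
          · simp [Nat.factorization_eq_zero_of_not_dvd hq'n]
        · simp [Nat.factorization_eq_zero_of_not_prime _ hq']
      exact hdne (Nat.dvd_antisymm hdn hnd)
  exact ⟨n.primeFactorsList.length, hpprime,
    Nat.eq_prime_pow_of_unique_prime_dvd hn.ne' (fun {q} hq hqn => key q hq hqn)⟩

end Arith
section Setup
variable {G : Type*} [Group G] [Fintype G]
open Subgroup

lemma cmp_congr {a b : G} (h : zpowers a = zpowers b) (u : G) : Cmp a u ↔ Cmp b u := by
  unfold Cmp
  rw [h]
  have : a ∈ zpowers u ↔ b ∈ zpowers u := by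
    rw [← zpowers_le, h, zpowers_le]
  rw [this]

lemma self_mem_twinClass (w : G) : w ∈ twinClass (powerGraph G) w := rfl

lemma twin_cmp {C : Set G} {w : G} (hC : C = twinClass (powerGraph G) w)
    {v : G} (hv : v ∈ C) (u : G) : Cmp v u ↔ Cmp w u := by
  rw [hC] at hv
  rw [← mem_closedNbhd_iff, ← mem_closedNbhd_iff, (hv : _ = _)]

lemma twin_clique {C : Set G} {w : G} (hC : C = twinClass (powerGraph G) w)
    {a b : G} (ha : a ∈ C) (hb : b ∈ C) : Cmp a b := by
  rw [twin_cmp hC ha]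
  rw [← twin_cmp hC hb]
  exact cmp_refl b

lemma one_not_mem {C : Set G} {w : G} (hC : C = twinClass (powerGraph G) w)
    (hS : C ≠ twinClass (powerGraph G) 1) : (1 : G) ∉ C := by
  intro h1
  apply hS
  rw [hC] at h1 ⊢
  have h1' : closedNbhd (powerGraph G) 1 = closedNbhd (powerGraph G) w := h1
  unfold twinClass
  rw [← h1']

lemma mem_twinClass_of_cmp_iff {C : Set G} {w : G} (hC : C = twinClass (powerGraph G) w)
    {v : G} (h : ∀ u, Cmp v u ↔ Cmp w u) : v ∈ C := by
  rw [hC]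
  show closedNbhd (powerGraph G) v = closedNbhd (powerGraph G) w
  ext u
  rw [mem_closedNbhd_iff, mem_closedNbhd_iff]
  exact h u

lemma hat_formula {C : Set G} {w x : G} (hC : C = twinClass (powerGraph G) w) (hx : x ∈ C) :
    nbhdClosure (powerGraph G) C = {z | ∀ u, Cmp x u → Cmp z u} := by
  have hKx : closedNbhd (powerGraph G) x = closedNbhd (powerGraph G) w := by
    rw [hC] at hx; exact hx
  have h1 : closedNbhdSet (powerGraph G) C = closedNbhd (powerGraph G) x := by
    ext u
    simp only [closedNbhdSet, Set.mem_iInter]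
    constructor
    · intro h; exact h x hx
    · intro hu v hv
      rw [hC] at hv
      rw [(hv : _ = _), ← hKx]
      exact hu
  rw [nbhdClosure, h1]
  ext z
  simp only [closedNbhdSet, Set.mem_iInter, Set.mem_setOf_eq]
  constructor
  · intro h u hu
    exact cmp_symm (mem_closedNbhd_iff.1 (h u (mem_closedNbhd_iff.2 hu)))
  · intro h u hu
    exact mem_closedNbhd_iff.2 (cmp_symm (h u (mem_closedNbhd_iff.1 hu)))

lemma zpowers_subset_hat {C : Set G} {w x : G} (hC : C = twinClass (powerGraph G) w)
    (hx : x ∈ C) {p r : ℕ} (hp : p.Prime) (hord : orderOf x = p ^ r) :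
    (zpowers x : Set G) ⊆ nbhdClosure (powerGraph G) C := by
  rw [hat_formula hC hx]
  intro z hz u hu
  rcases hu with hu | hu
  · exact cmp_symm (cmp_of_mem_zpowers_prime_pow hp hord hu hz)
  · exact Or.inr ((zpowers_le.2 hu) hz)

end Setup
section Forward
variable {G : Type*} [Group G] [Fintype G]
open Subgroup

lemma forward_dir {C : Set G} {w : G} (hC : C = twinClass (powerGraph G) w)
    (hS : C ≠ twinClass (powerGraph G) 1)
    (h : ∃ a ∈ C, ∃ b ∈ C, Subgroup.zpowers a ≠ Subgroup.zpowers b) :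
    ∃ p r s : ℕ, p.Prime ∧ 2 ≤ r ∧ s ≤ r - 2 ∧
      C.ncard = p ^ r - p ^ s ∧ (nbhdClosure (powerGraph G) C).ncard = p ^ r := by
  have hwC : w ∈ C := hC ▸ self_mem_twinClass w
  have h1C : (1 : G) ∉ C := one_not_mem hC hS
  obtain ⟨x, hxC, hxmax⟩ := Set.exists_max_image C orderOf (Set.toFinite C) ⟨w, hwC⟩
  have hnpos : 0 < orderOf x := orderOf_pos x
  have hCsub : ∀ v ∈ C, v ∈ zpowers x := by
    intro v hv
    rcases twin_clique hC hxC hv with h' | h'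
    · exact h'
    · have hdvd : orderOf x ∣ orderOf v := orderOf_dvd_of_mem_zpowers h'
      have heq : orderOf v = orderOf x :=
        le_antisymm (hxmax v hv) (Nat.le_of_dvd (orderOf_pos v) hdvd)
      have h2 := zpowers_eq_of_mem_of_orderOf_dvd h' (dvd_of_eq heq)
      rw [h2]; exact mem_zpowers v
  obtain ⟨y0, hy0C, hy0ne⟩ : ∃ y0 ∈ C, zpowers y0 ≠ zpowers x := by
    obtain ⟨a, ha, b, hb, hab⟩ := h
    by_cases hax : zpowers a = zpowers x
    · exact ⟨b, hb, fun hbx => hab (hax.trans hbx.symm)⟩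
    · exact ⟨a, ha, hax⟩
  have hm_dvd : orderOf y0 ∣ orderOf x := orderOf_dvd_of_mem_zpowers (hCsub y0 hy0C)
  have hm_ne : orderOf y0 ≠ orderOf x := by
    intro hmn
    exact hy0ne (zpowers_eq_of_mem_of_orderOf_dvd (hCsub y0 hy0C) (dvd_of_eq hmn.symm))
  have hm2 : 2 ≤ orderOf y0 := by
    have h1 : orderOf y0 ≠ 1 := fun h' => h1C ((orderOf_eq_one_iff.1 h') ▸ hy0C)
    have h2 := orderOf_pos y0
    omega
  have hdiv : ∀ e, e ∣ orderOf x → orderOf y0 ∣ e ∨ e ∣ orderOf y0 := by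
    intro e he
    obtain ⟨u, hu, hue⟩ := exists_mem_zpowers_orderOf_eq he
    have hcy : Cmp y0 u := by
      rw [twin_cmp hC hy0C, ← twin_cmp hC hxC]
      exact Or.inl hu
    rcases hcy with h' | h'
    · exact Or.inr (hue ▸ orderOf_dvd_of_mem_zpowers h')
    · exact Or.inl (hue ▸ orderOf_dvd_of_mem_zpowers h')
  obtain ⟨r, hp, hnpr⟩ := prime_pow_of_middle_divisor hnpos hm_dvd hm2 hm_ne hdiv
  generalize hpm : (orderOf y0).minFac = p at hp hnpr
  obtain ⟨t, htr', hmt⟩ := (Nat.dvd_prime_pow hp).1 (hnpr ▸ hm_dvd)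
  have ht1 : 1 ≤ t := by
    rcases Nat.eq_zero_or_pos t with rfl | h'
    · rw [pow_zero] at hmt; omega
    · exact h'
  have htr : t < r := by
    rcases Nat.lt_or_ge t r with h' | h'
    · exact h'
    · exact absurd (by rw [hmt, le_antisymm htr' h', ← hnpr]) hm_ne
  have hr2 : 2 ≤ r := by omega
  obtain ⟨y1, hy1C, hy1min⟩ := Set.exists_min_image C orderOf (Set.toFinite C) ⟨w, hwC⟩
  obtain ⟨t1, ht1r, hm1⟩ := (Nat.dvd_prime_pow hp).1
    (hnpr ▸ orderOf_dvd_of_mem_zpowers (hCsub y1 hy1C))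
  have ht1pos : 1 ≤ t1 := by
    rcases Nat.eq_zero_or_pos t1 with rfl | h'
    · exfalso
      apply h1C
      have h2 : orderOf y1 = 1 := by rw [hm1, pow_zero]
      exact (orderOf_eq_one_iff.1 h2) ▸ hy1C
    · exact h'
  have ht1t : t1 ≤ t := by
    have h' : orderOf y1 ≤ orderOf y0 := hy1min y0 hy0C
    rw [hm1, hmt] at h'
    exact (Nat.pow_le_pow_iff_right hp.one_lt).1 h'
  have hsr : t1 - 1 ≤ r - 2 := by omega
  have hmemC : ∀ v : G, v ∈ zpowers x → p ^ t1 ∣ orderOf v → v ∈ C := by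
    intro v hvx hta
    have hy1v : y1 ∈ zpowers v := by
      apply mem_zpowers_of_orderOf_dvd (hCsub y1 hy1C) hvx
      rw [hm1]; exact hta
    apply mem_twinClass_of_cmp_iff hC
    intro u
    rw [← twin_cmp hC hxC u]
    constructor
    · rintro (h' | h')
      · exact Or.inl ((zpowers_le.2 hvx) h')
      · rw [twin_cmp hC hxC u, ← twin_cmp hC hy1C u]
        exact Or.inr ((zpowers_le.2 h') hy1v)
    · rintro (h' | h')
      · exact cmp_symm (cmp_of_mem_zpowers_prime_pow hp hnpr h' hvx)
      · exact Or.inr ((zpowers_le.2 h') hvx)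
  have hCeq : C = {v : G | v ∈ zpowers x ∧ ¬ (orderOf v ∣ p ^ (t1 - 1))} := by
    ext v
    constructor
    · intro hv
      refine ⟨hCsub v hv, fun hdvd => ?_⟩
      have h' : orderOf y1 ≤ orderOf v := hy1min v hv
      have h'' : orderOf v ≤ p ^ (t1 - 1) := Nat.le_of_dvd (pow_pos hp.pos _) hdvd
      rw [hm1] at h'
      have := (Nat.pow_le_pow_iff_right hp.one_lt).1 (h'.trans h'')
      omega
    · rintro ⟨hvx, hnd⟩
      apply hmemC v hvx
      obtain ⟨a, har, hva⟩ := (Nat.dvd_prime_pow hp).1 (hnpr ▸ orderOf_dvd_of_mem_zpowers hvx)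
      have hta : t1 ≤ a := by
        by_contra h'
        exact hnd (by rw [hva]; exact pow_dvd_pow p (by omega))
      rw [hva]; exact pow_dvd_pow p hta
  have hCcard : C.ncard = p ^ r - p ^ (t1 - 1) := by
    have hsubs : {v : G | v ∈ zpowers x ∧ orderOf v ∣ p ^ (t1 - 1)} ⊆ (zpowers x : Set G) :=
      fun v hv => hv.1
    have hdiff : C = (zpowers x : Set G) \ {v : G | v ∈ zpowers x ∧ orderOf v ∣ p ^ (t1 - 1)} := by
      rw [hCeq]
      ext v
      simp only [Set.mem_setOf_eq, Set.mem_diff, SetLike.mem_coe]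
      tauto
    rw [hdiff, Set.ncard_diff hsubs (Set.toFinite _), ncard_zpowers, hnpr,
      setOf_mem_orderOf_dvd_ncard (show p ^ (t1 - 1) ∣ orderOf x by
        rw [hnpr]; exact pow_dvd_pow p (by omega))]
  have hhat : nbhdClosure (powerGraph G) C = (zpowers x : Set G) := by
    apply Set.Subset.antisymm _ (zpowers_subset_hat hC hxC hp hnpr)
    rw [hat_formula hC hxC]
    intro z hz
    simp only [Set.mem_setOf_eq] at hz
    rcases hz x (cmp_refl x) with h' | h'
    · by_cases hq : ∀ q : ℕ, q.Prime → q ∣ orderOf z → q = p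
      · have hznpos : orderOf z ≠ 0 := (orderOf_pos z).ne'
        have hzpow := Nat.eq_prime_pow_of_unique_prime_dvd hznpos
          (fun {q} hq' hq'' => hq q hq' hq'')
        apply hCsub z
        apply mem_twinClass_of_cmp_iff hC
        intro u
        rw [← twin_cmp hC hxC u]
        constructor
        · rintro (h'' | h'')
          · exact cmp_symm (cmp_of_mem_zpowers_prime_pow hp hzpow h'' h')
          · exact Or.inr ((zpowers_le.2 h'') h')
        · exact hz u
      · push_neg at hq
        obtain ⟨q, hqprime, hqdvd, hqp⟩ := hq
        exfalso
        have hco : Nat.Coprime q (p ^ t1) :=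
          Nat.Coprime.pow_right _ ((Nat.coprime_primes hqprime hp).2 hqp)
        have hdvd2 : q * p ^ t1 ∣ orderOf z := by
          apply Nat.Coprime.mul_dvd_of_dvd_of_dvd hco hqdvd
          calc p ^ t1 ∣ p ^ r := pow_dvd_pow p (by omega)
            _ = orderOf x := hnpr.symm
            _ ∣ orderOf z := orderOf_dvd_of_mem_zpowers h'
        obtain ⟨u, huz, huord⟩ := exists_mem_zpowers_orderOf_eq hdvd2
        have hy1u : y1 ∈ zpowers u := by
          apply mem_zpowers_of_orderOf_dvd _ huz
          · rw [hm1, huord]; exact dvd_mul_left _ _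
          · exact (zpowers_le.2 h') (hCsub y1 hy1C)
        have hcxu : Cmp x u := by
          rw [twin_cmp hC hxC u, ← twin_cmp hC hy1C u]
          exact Or.inr hy1u
        rcases hcxu with h'' | h''
        · have hqpr : q ∣ p ^ r := by
            calc q ∣ orderOf u := huord ▸ dvd_mul_right q _
              _ ∣ orderOf x := orderOf_dvd_of_mem_zpowers h''
              _ = p ^ r := hnpr
          exact hqp ((Nat.prime_dvd_prime_iff_eq hqprime hp).1 (hqprime.dvd_of_dvd_pow hqpr))
        · have hpr : p ^ r ∣ q * p ^ t1 := by
            calc p ^ r = orderOf x := hnpr.symm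
              _ ∣ orderOf u := orderOf_dvd_of_mem_zpowers h''
              _ = q * p ^ t1 := huord
          have h3 : p ^ r ∣ p ^ t1 :=
            Nat.Coprime.dvd_of_dvd_mul_left
              (Nat.Coprime.pow_left _ ((Nat.coprime_primes hp hqprime).2 (Ne.symm hqp))) hpr
          have := (Nat.pow_dvd_pow_iff_le_right hp.one_lt).1 h3
          omega
    · exact h'
  refine ⟨p, r, t1 - 1, hp, hr2, hsr, hCcard, ?_⟩
  rw [hhat, ncard_zpowers]
  exact hnpr
end Forward
section Backward
variable {G : Type*} [Group G] [Fintype G]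
open Subgroup

lemma backward_dir {C : Set G} {w : G} (hC : C = twinClass (powerGraph G) w)
    (hS : C ≠ twinClass (powerGraph G) 1)
    (hncrit : ¬ IsCritical (powerGraph G) C)
    (hall : ∀ a ∈ C, ∀ b ∈ C, Subgroup.zpowers a = Subgroup.zpowers b)
    {p r s : ℕ} (hp : p.Prime) (hr2 : 2 ≤ r) (hsr : s ≤ r - 2)
    (hcard : C.ncard = p ^ r - p ^ s)
    (hhatcard : (nbhdClosure (powerGraph G) C).ncard = p ^ r) : False := by
  have hwC : w ∈ C := hC ▸ self_mem_twinClass w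
  have h1C : (1 : G) ∉ C := one_not_mem hC hS
  have hw1 : w ≠ 1 := fun h' => h1C (h' ▸ hwC)
  have hnpos : 0 < orderOf w := orderOf_pos w
  -- C is the diamond class of w
  have hdiam : C = diamondClass w := by
    ext v
    constructor
    · intro hv; exact hall v hv w hwC
    · intro hv
      apply mem_twinClass_of_cmp_iff hC
      exact cmp_congr (hv : zpowers v = zpowers w)
  -- the hat described by comparability
  have hhat_mem : ∀ z : G, z ∈ nbhdClosure (powerGraph G) C ↔ ∀ u, Cmp w u → Cmp z u := by
    intro z
    rw [hat_formula hC hwC]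
    rfl
  -- C ∪ {1} ⊆ hat
  have hsub : C ∪ {1} ⊆ nbhdClosure (powerGraph G) C := by
    rintro v (hv | hv)
    · rw [hhat_mem]
      intro u hu
      rw [twin_cmp hC hv]
      exact hu
    · rw [hhat_mem]
      intro u _
      rw [(hv : v = 1)]
      exact Or.inr (one_mem _)
  have hps_pos : 0 < p ^ s := pow_pos hp.pos s
  have hps_lt : p ^ s * 4 ≤ p ^ r := by
    calc p ^ s * 4 ≤ p ^ s * p ^ 2 := by
          have := hp.two_le
          have : 4 ≤ p ^ 2 := by nlinarith
          exact Nat.mul_le_mul_left _ this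
      _ = p ^ (s + 2) := by rw [pow_add]
      _ ≤ p ^ r := Nat.pow_le_pow_right hp.pos (by omega)
  have hcard_union : (C ∪ {1}).ncard = p ^ r - p ^ s + 1 := by
    rw [Set.union_singleton, Set.ncard_insert_of_notMem h1C (Set.toFinite C), hcard]
  -- the extra part E
  have hEcard : (nbhdClosure (powerGraph G) C \ (C ∪ {1})).ncard = p ^ s - 1 := by
    rw [Set.ncard_diff hsub (Set.toFinite _), hhatcard, hcard_union]
    omega
  -- every element of the hat lies in ⟨w⟩
  have hhat_sub : ∀ z ∈ nbhdClosure (powerGraph G) C, z ∈ zpowers w := by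
    intro z hz
    have hzw : Cmp z w := (hhat_mem z).1 hz w (cmp_refl w)
    rcases hzw with h' | h'
    swap
    · exact h'
    -- w ∈ zpowers z; suppose z ∉ zpowers w
    by_cases hzmem : z ∈ zpowers w
    · exact hzmem
    exfalso
    have hne : zpowers z ≠ zpowers w := by
      intro h''
      exact hzmem (h'' ▸ mem_zpowers z)
    have hdvd : orderOf w ∣ orderOf z := orderOf_dvd_of_mem_zpowers h'
    -- diamond class of z is inside E
    have hdsub : diamondClass z ⊆ nbhdClosure (powerGraph G) C \ (C ∪ {1}) := by
      intro g hg
      have hgz : zpowers g = zpowers z := hg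
      constructor
      · rw [hhat_mem]
        intro u hu
        rw [cmp_congr hgz]
        exact (hhat_mem z).1 hz u hu
      · rintro (hgC | hg1)
        · have : zpowers g = zpowers w := hall g hgC w hwC
          exact hne (hgz ▸ this)
        · have hg1' : g = 1 := hg1
          rw [hg1', zpowers_one_eq_bot] at hgz
          have : w = 1 := by
            have := h'
            rw [← hgz] at this
            simpa using this
          exact hw1 this
    have hcard_d : (diamondClass z).ncard = Nat.totient (orderOf z) := ncard_diamondClass z
    have hcard_w : (diamondClass w).ncard = Nat.totient (orderOf w) := ncard_diamondClass w
    have h1 : Nat.totient (orderOf w) ≤ Nat.totient (orderOf z) :=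
      Nat.le_of_dvd (Nat.totient_pos.2 (orderOf_pos z)) (Nat.totient_dvd_of_dvd hdvd)
    have h2 : (diamondClass z).ncard ≤ p ^ s - 1 := by
      rw [← hEcard]
      exact Set.ncard_le_ncard hdsub (Set.toFinite _)
    rw [hcard_d] at h2
    rw [← hcard_w, ← hdiam, hcard] at h1
    omega
  -- case split: is there an element of the hat outside C ∪ {1}?
  by_cases hD : ∀ z ∈ nbhdClosure (powerGraph G) C, z ∈ C ∪ {1}
  · -- hat = C ∪ {1} : critical, contradiction
    apply hncrit
    refine ⟨Set.Subset.antisymm hD hsub, h1C, p, r, hp, hr2, hhatcard⟩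
  · push_neg at hD
    obtain ⟨z, hz, hznot⟩ := hD
    have hz1 : z ≠ 1 := fun h' => hznot (Or.inr h')
    have hzC : z ∉ C := fun h' => hznot (Or.inl h')
    have hzw : z ∈ zpowers w := hhat_sub z hz
    have hd_dvd : orderOf z ∣ orderOf w := orderOf_dvd_of_mem_zpowers hzw
    have hd2 : 2 ≤ orderOf z := by
      have h1 : orderOf z ≠ 1 := fun h'' => hz1 (orderOf_eq_one_iff.1 h'')
      have h2 := orderOf_pos z
      omega
    have hd_ne : orderOf z ≠ orderOf w := by
      intro h''
      apply hzC
      rw [hdiam]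
      exact zpowers_eq_of_mem_of_orderOf_dvd hzw (dvd_of_eq h''.symm)
    have hdiv : ∀ e, e ∣ orderOf w → orderOf z ∣ e ∨ e ∣ orderOf z := by
      intro e he
      obtain ⟨u, hu, hue⟩ := exists_mem_zpowers_orderOf_eq he
      have hcz : Cmp z u := (hhat_mem z).1 hz u (Or.inl hu)
      rcases hcz with h'' | h''
      · exact Or.inr (hue ▸ orderOf_dvd_of_mem_zpowers h'')
      · exact Or.inl (hue ▸ orderOf_dvd_of_mem_zpowers h'')
    obtain ⟨k, hq, hwq⟩ := prime_pow_of_middle_divisor hnpos hd_dvd hd2 hd_ne hdiv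
    generalize hqm : (orderOf z).minFac = q at hq hwq
    -- ⟨w⟩ ⊆ hat
    have hwsub : (zpowers w : Set G) ⊆ nbhdClosure (powerGraph G) C :=
      zpowers_subset_hat hC hwC hq hwq
    have hhat_eq : nbhdClosure (powerGraph G) C = (zpowers w : Set G) :=
      Set.Subset.antisymm hhat_sub hwsub
    have hn_pr : orderOf w = p ^ r := by
      rw [← hhatcard, hhat_eq, ncard_zpowers]
    have hphi : Nat.totient (orderOf w) = p ^ (r - 1) * (p - 1) := by
      rw [hn_pr, Nat.totient_prime_pow hp (by omega)]
    have hCphi : C.ncard = Nat.totient (orderOf w) := by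
      rw [hdiam, ncard_diamondClass]
    -- p^r - p^s = p^(r-1) * (p-1) = p^r - p^(r-1)  forces s = r - 1
    have hexp : p ^ (r - 1) * (p - 1) = p ^ r - p ^ (r - 1) := by
      have h2 : p ^ r = p ^ (r - 1) * p := by
        rw [← pow_succ]
        congr 1
        omega
      have := hp.pos
      rw [h2, Nat.mul_sub_one]
    have hps : p ^ s = p ^ (r - 1) := by
      have h1 : p ^ s ≤ p ^ r := Nat.pow_le_pow_right hp.pos (by omega)
      have h2 : p ^ (r - 1) ≤ p ^ r := Nat.pow_le_pow_right hp.pos (by omega)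
      have h3 : p ^ r - p ^ s = p ^ r - p ^ (r - 1) := by
        rw [← hcard, hCphi, hphi, hexp]
      omega
    have := Nat.pow_right_injective hp.two_le hps
    omega
end Backward

theorem stmt15 {G : Type*} [Group G] [Fintype G] (C : Set G) (w : G)
    (hC : C = twinClass (powerGraph G) w)
    (hS : C ≠ twinClass (powerGraph G) 1)
    (hncrit : ¬ IsCritical (powerGraph G) C) :
    (∃ a ∈ C, ∃ b ∈ C, Subgroup.zpowers a ≠ Subgroup.zpowers b) ↔
      ∃ p r s : ℕ, p.Prime ∧ 2 ≤ r ∧ s ≤ r - 2 ∧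
        C.ncard = p ^ r - p ^ s ∧ (nbhdClosure (powerGraph G) C).ncard = p ^ r := by
  constructor
  · exact forward_dir hC hS
  · rintro ⟨p, r, s, hp, hr2, hsr, hcard, hhatcard⟩
    by_contra hL
    push_neg at hL
    exact backward_dir hC hS hncrit hL hp hr2 hsr hcard hhatcard
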